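/- Let (A_m)_{m≥0}, (B_m)_{m≥1}, and (α_m)_{m≥0} be nonnegative real sequences with 0 < α̲ ≤ α_m ≤ ᾱ < ∞ for all m. If α_{m+1} A_{m+1}² ≤ B_m A_m for all m ≥ 1 and ∑_{m=1}^∞ B_m < ∞, then ∑_{m=1}^∞ A_m < ∞. -/
import Mathlib


/-- Special case of Lemma 2.2 with one block (`s = 1`), `n_{1,m} = m`, `β = 0`. -/
theorem seq_lemma_single_block
    (A B α : ℕ → ℝ) (alow aup : ℝ)
    (hA : ∀ m, 0 ≤ A m) (hB : ∀ m, 0 ≤ B m) (hα : ∀ m, 0 ≤ α m)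
    (halow : 0 < alow) (hbounds : ∀ m, alow ≤ α m ∧ α m ≤ aup)
    (hcond : ∀ m, 1 ≤ m → α (m + 1) * A (m + 1) ^ 2 ≤ B m * A m)
    (hBsum : Summable (fun m => B (m + 1))) :
    Summable (fun m => A (m + 1)) := by
  set CB := ∑' m, B (m + 1) with hCB
  have hCBnn : 0 ≤ CB := tsum_nonneg (fun m => hB _)
  have key : ∀ m, 1 ≤ m → A (m + 1) ≤ (B m / alow + A m) / 2 := by
    intro m hm
    have h1 := hcond m hm
    have h2 := (hbounds (m + 1)).1
    have h3 := hA (m + 1)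
    have h4 := hA m
    have h5 := hB m
    have hdiv : A (m + 1) ^ 2 ≤ (B m / alow) * A m := by
      rw [div_mul_eq_mul_div, le_div_iff₀ halow]
      nlinarith [sq_nonneg (A (m + 1))]
    have hb := div_nonneg h5 halow.le
    nlinarith [sq_nonneg (B m / alow - A m), sq_nonneg (B m / alow + A m)]
  have bound : ∀ N, ∑ i ∈ Finset.range N, A (i + 1) ≤ 2 * A 1 + CB / alow := by
    intro N
    cases N with
    | zero =>
      simp only [Finset.range_zero, Finset.sum_empty]
      have := hA 1
      positivity
    | succ n =>
      have hsum : ∑ i ∈ Finset.range n, A (i + 2) ≤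
          ∑ i ∈ Finset.range n, (B (i + 1) / alow + A (i + 1)) / 2 := by
        refine Finset.sum_le_sum (fun i _ => ?_)
        exact key (i + 1) (Nat.le_add_left 1 i)
      have hsplit : ∑ i ∈ Finset.range (n + 1), A (i + 1)
          = (∑ i ∈ Finset.range n, A (i + 2)) + A 1 := by
        rw [Finset.sum_range_succ']
      have hBle : ∑ i ∈ Finset.range n, B (i + 1) ≤ CB :=
        Summable.sum_le_tsum (Finset.range n) (fun i _ => hB _) hBsum
      have hAle : ∑ i ∈ Finset.range n, A (i + 1) ≤
          ∑ i ∈ Finset.range (n + 1), A (i + 1) :=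
        Finset.sum_le_sum_of_subset_of_nonneg
          (Finset.range_subset_range.2 n.le_succ) (fun i _ _ => hA _)
      have hRHS : ∑ i ∈ Finset.range n, (B (i + 1) / alow + A (i + 1)) / 2
          = ((∑ i ∈ Finset.range n, B (i + 1)) / alow
            + ∑ i ∈ Finset.range n, A (i + 1)) / 2 := by
        rw [Finset.sum_div, ← Finset.sum_add_distrib, Finset.sum_div]
      have hdivle : (∑ i ∈ Finset.range n, B (i + 1)) / alow ≤ CB / alow := by
        gcongr
      linarith
  exact summable_of_sum_range_le (fun n => hA _) bound
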